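/- Let θ : ℤ × ℤ → ℝ be the flow defined below and let (p_n)_{n≥1} be positive reals with p_{−n} := p_n, p_1, p_2, p_3 > 0. Then the energy of θ with respect to the conductances c(u,v) = p_{|v−u|} satisfies (1/2) ∑_{u≠v, u,v∈ℤ} θ(u,v)²/p_{|v−u|} ≤ 3/(4 p_1) + 1/(8 p_2) + 32/(3 p_2) + 32/(3 p_3) + 288 ∑_{w≥4} 1/((w−3)³ p_w). In particular, if ∑_{n≥1} 1/(n³ p_n) < ∞ then the energy of θ is finite. -/

import Mathlib

/-- The index of the block of `ℤ` containing `u`, where `B_0 = {0}`,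
`B_i = {2^(i-1), …, 2^i - 1}` and `B_{-i} = -B_i` for `i ≥ 1`. -/
def blockIdx (u : ℤ) : ℤ :=
  if u = 0 then 0
  else if 0 < u then (Nat.log 2 u.toNat : ℤ) + 1
  else -((Nat.log 2 (-u).toNat : ℤ) + 1)

/-- The flow `θ` on `ℤ` from `0` to infinity: for `u ∈ B_i`, `v ∈ B_j`,
`θ(u,v) = 1/2` if `i = 0` and `j = ±1`; `θ(u,v) = 2^(-2|i|)` if `0 < i`, `j = i+1`
or `i < 0`, `j = i-1`; `θ(u,v) = 0` if `i = j` or `|i-j| ≥ 2`; and antisymmetry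
`θ(u,v) = -θ(v,u)` in the remaining cases. -/
noncomputable def theta (u v : ℤ) : ℝ :=
  let i := blockIdx u
  let j := blockIdx v
  if i = 0 ∧ (j = 1 ∨ j = -1) then 1 / 2
  else if j = 0 ∧ (i = 1 ∨ i = -1) then -(1 / 2)
  else if 0 < i ∧ j = i + 1 then (2 : ℝ) ^ (-(2 * i))
  else if i < 0 ∧ j = i - 1 then (2 : ℝ) ^ (2 * i)
  else if 0 < j ∧ i = j + 1 then -((2 : ℝ) ^ (-(2 * j)))
  else if j < 0 ∧ i = j - 1 then -((2 : ℝ) ^ (2 * j))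
  else 0


noncomputable def core (i j : ℤ) : ℝ :=
  if i = 0 ∧ (j = 1 ∨ j = -1) then 1 / 2
  else if j = 0 ∧ (i = 1 ∨ i = -1) then -(1 / 2)
  else if 0 < i ∧ j = i + 1 then (2 : ℝ) ^ (-(2 * i))
  else if i < 0 ∧ j = i - 1 then (2 : ℝ) ^ (2 * i)
  else if 0 < j ∧ i = j + 1 then -((2 : ℝ) ^ (-(2 * j)))
  else if j < 0 ∧ i = j - 1 then -((2 : ℝ) ^ (2 * j))
  else 0

lemma theta_eq_core (u v : ℤ) : theta u v = core (blockIdx u) (blockIdx v) := rfl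

lemma core_sq_swap (i j : ℤ) : core j i ^ 2 = core i j ^ 2 := by
  unfold core
  split_ifs
  all_goals first
  | ring1
  | (exfalso; omega)

lemma theta_sq_swap (u v : ℤ) : theta v u ^ 2 = theta u v ^ 2 := by
  rw [theta_eq_core, theta_eq_core, core_sq_swap]

lemma blockIdx_zero : blockIdx 0 = 0 := rfl

lemma exists_block_pos (u : ℤ) (hu : 1 ≤ u) :
    ∃ a : ℕ, blockIdx u = (a : ℤ) + 1 ∧ (2 : ℤ) ^ a ≤ u ∧ u < 2 ^ (a + 1) := by
  refine ⟨Nat.log 2 u.toNat, ?_, ?_, ?_⟩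
  · unfold blockIdx
    rw [if_neg (by omega), if_pos (by omega)]
  · have h := Nat.pow_log_le_self 2 (show u.toNat ≠ 0 by omega)
    have : ((2 ^ Nat.log 2 u.toNat : ℕ) : ℤ) ≤ (u.toNat : ℤ) := by exact_mod_cast h
    push_cast at this
    omega
  · have h := Nat.lt_pow_succ_log_self (show 1 < 2 by norm_num) u.toNat
    have : (u.toNat : ℤ) < ((2 ^ (Nat.log 2 u.toNat + 1) : ℕ) : ℤ) := by exact_mod_cast h
    push_cast at this
    omega

lemma exists_block_neg (u : ℤ) (hu : u ≤ -1) :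
    ∃ a : ℕ, blockIdx u = -((a : ℤ) + 1) ∧ (2 : ℤ) ^ a ≤ -u ∧ -u < 2 ^ (a + 1) := by
  obtain ⟨a, h1, h2, h3⟩ := exists_block_pos (-u) (by omega)
  refine ⟨a, ?_, h2, h3⟩
  unfold blockIdx at h1 ⊢
  rw [if_neg (by omega), if_neg (by omega)]
  rw [if_neg (by omega), if_pos (by omega)] at h1
  omega

lemma two_zpow_sq (c : ℕ) :
    ((2 : ℝ) ^ (-(2 * ((c : ℤ) + 1)))) ^ 2 = 1 / ((2 : ℝ) ^ (c + 1)) ^ 4 := by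
  have h1 : ((2 : ℝ) ^ (-(2 * ((c : ℤ) + 1)))) ^ (2 : ℕ)
      = (2 : ℝ) ^ ((-(2 * ((c : ℤ) + 1))) * 2) := by
    rw [← zpow_natCast ((2:ℝ) ^ (-(2 * ((c:ℤ)+1)))) 2, ← zpow_mul]
    norm_num
  have h2 : ((2 : ℝ) ^ (c + 1)) ^ (4 : ℕ) = (2 : ℝ) ^ (((c : ℤ) + 1) * 4) := by
    rw [show ((c : ℤ) + 1) * 4 = ((c+1) * 4 : ℕ) by push_cast; ring, zpow_natCast, pow_mul]
  rw [h1, h2, one_div, ← zpow_neg]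
  congr 1
  ring

lemma core_eval_pos (a b : ℕ) :
    core ((a : ℤ) + 1) ((b : ℤ) + 1)
      = if (b : ℤ) = a + 1 then (2 : ℝ) ^ (-(2 * ((a : ℤ) + 1)))
        else if (a : ℤ) = b + 1 then -((2 : ℝ) ^ (-(2 * ((b : ℤ) + 1)))) else 0 := by
  unfold core
  split_ifs <;> first | rfl | (exfalso; omega) | (norm_num; omega)

lemma core_eval_neg (a b : ℕ) :
    core (-((a : ℤ) + 1)) (-((b : ℤ) + 1))
      = if (a : ℤ) = b + 1 then -((2 : ℝ) ^ (2 * (-((b : ℤ) + 1))))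
        else if (b : ℤ) = a + 1 then (2 : ℝ) ^ (2 * (-((a : ℤ) + 1))) else 0 := by
  unfold core
  split_ifs <;> first | rfl | (exfalso; omega) | (norm_num; omega)

lemma theta_pos_bound (u w : ℤ) (hu : 1 ≤ u) (hw : 1 ≤ w)
    (hne : theta u (u + w) ≠ 0) :
    w < 3 * u ∧ theta u (u + w) ^ 2 ≤ 1 / (u : ℝ) ^ 4 := by
  obtain ⟨a, hia, ha1, ha2⟩ := exists_block_pos u hu
  obtain ⟨b, hjb, hb1, hb2⟩ := exists_block_pos (u + w) (by omega)
  rw [theta_eq_core, hia, hjb, core_eval_pos] at hne ⊢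
  by_cases hab : (b : ℤ) = (a : ℤ) + 1
  · rw [if_pos hab] at hne ⊢
    have hb' : b = a + 1 := by exact_mod_cast hab
    subst hb'
    constructor
    · have h4 : (2 : ℤ) ^ (a + 1 + 1) = 4 * 2 ^ a := by rw [pow_succ, pow_succ]; ring
      linarith
    · rw [two_zpow_sq a]
      apply one_div_le_one_div_of_le (by positivity)
      have hcast : (u : ℝ) ≤ (2 : ℝ) ^ (a + 1) := by exact_mod_cast ha2.le
      have hu0 : (0 : ℝ) ≤ (u : ℝ) := by exact_mod_cast (by omega : (0:ℤ) ≤ u)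
      exact pow_le_pow_left₀ hu0 hcast 4
  · exfalso
    rw [if_neg hab] at hne
    by_cases hba : (a : ℤ) = (b : ℤ) + 1
    · have ha' : a = b + 1 := by exact_mod_cast hba
      subst ha'
      linarith
    · rw [if_neg hba] at hne; exact hne rfl

lemma theta_pos_one (u : ℤ) (hu : 1 ≤ u) :
    theta u (u + 1) ^ 2 ≤ 1 / ((u : ℝ) + 1) ^ 4 := by
  by_cases hne : theta u (u + 1) = 0
  · rw [hne]
    norm_num
    positivity
  obtain ⟨a, hia, ha1, ha2⟩ := exists_block_pos u hu
  obtain ⟨b, hjb, hb1, hb2⟩ := exists_block_pos (u + 1) (by omega)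
  rw [theta_eq_core, hia, hjb, core_eval_pos] at hne ⊢
  by_cases hab : (b : ℤ) = (a : ℤ) + 1
  · rw [if_pos hab] at hne ⊢
    have hb' : b = a + 1 := by exact_mod_cast hab
    subst hb'
    rw [two_zpow_sq a]
    apply one_div_le_one_div_of_le (by positivity)
    have hcast : ((u : ℝ) + 1) ≤ (2 : ℝ) ^ (a + 1) := by
      have : u + 1 ≤ (2:ℤ) ^ (a + 1) := ha2
      exact_mod_cast this
    have hu0 : (0 : ℝ) ≤ (u : ℝ) + 1 := by
      have : (0:ℝ) ≤ (u:ℝ) := by exact_mod_cast (by omega : (0:ℤ) ≤ u)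
      linarith
    exact pow_le_pow_left₀ hu0 hcast 4
  · exfalso
    rw [if_neg hab] at hne
    by_cases hba : (a : ℤ) = (b : ℤ) + 1
    · have ha' : a = b + 1 := by exact_mod_cast hba
      subst ha'
      linarith
    · rw [if_neg hba] at hne; exact hne rfl

lemma theta_neg_bound (u w : ℤ) (hv : u + w ≤ -1) (hw : 1 ≤ w)
    (hne : theta u (u + w) ≠ 0) :
    w < 3 * (-(u + w)) ∧ theta u (u + w) ^ 2 ≤ 1 / ((-(u + w) : ℤ) : ℝ) ^ 4 := by
  obtain ⟨a, hia, ha1, ha2⟩ := exists_block_neg u (by omega)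
  obtain ⟨b, hjb, hb1, hb2⟩ := exists_block_neg (u + w) hv
  rw [theta_eq_core, hia, hjb, core_eval_neg] at hne ⊢
  by_cases hab : (a : ℤ) = (b : ℤ) + 1
  · rw [if_pos hab] at hne ⊢
    have ha' : a = b + 1 := by exact_mod_cast hab
    subst ha'
    constructor
    · have h4 : (2 : ℤ) ^ (b + 1 + 1) = 4 * 2 ^ b := by rw [pow_succ, pow_succ]; ring
      linarith
    · have hval : (-((2:ℝ) ^ (2 * (-((b : ℤ) + 1))))) ^ 2
          = ((2:ℝ) ^ (-(2 * ((b : ℤ) + 1)))) ^ 2 := by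
        rw [neg_sq, show (2 * (-((b:ℤ)+1))) = -(2*((b:ℤ)+1)) by ring]
      rw [hval, two_zpow_sq b]
      have hpos : (0:ℝ) < (((-(u + w) : ℤ)) : ℝ) := by
        exact_mod_cast (by omega : (0:ℤ) < -(u+w))
      apply one_div_le_one_div_of_le (pow_pos hpos 4)
      have hcast : (((-(u + w) : ℤ)) : ℝ) ≤ (2 : ℝ) ^ (b + 1) := by exact_mod_cast hb2.le
      exact pow_le_pow_left₀ hpos.le hcast 4
  · exfalso
    rw [if_neg hab] at hne
    by_cases hba : (b : ℤ) = (a : ℤ) + 1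
    · have hb' : b = a + 1 := by exact_mod_cast hba
      subst hb'
      linarith
    · rw [if_neg hba] at hne; exact hne rfl

lemma theta_neg_one (u : ℤ) (hu : u ≤ -2) :
    theta u (u + 1) ^ 2 ≤ 1 / (u : ℝ) ^ 4 := by
  by_cases hne : theta u (u + 1) = 0
  · rw [hne]
    norm_num
    positivity
  obtain ⟨a, hia, ha1, ha2⟩ := exists_block_neg u (by omega)
  obtain ⟨b, hjb, hb1, hb2⟩ := exists_block_neg (u + 1) (by omega)
  rw [theta_eq_core, hia, hjb, core_eval_neg] at hne ⊢
  by_cases hab : (a : ℤ) = (b : ℤ) + 1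
  · rw [if_pos hab] at hne ⊢
    have ha' : a = b + 1 := by exact_mod_cast hab
    subst ha'
    have hval : (-((2:ℝ) ^ (2 * (-((b : ℤ) + 1))))) ^ 2
        = ((2:ℝ) ^ (-(2 * ((b : ℤ) + 1)))) ^ 2 := by
      rw [neg_sq, show (2 * (-((b:ℤ)+1))) = -(2*((b:ℤ)+1)) by ring]
    rw [hval, two_zpow_sq b]
    have hrw : (1:ℝ) / (u:ℝ)^4 = 1 / (((-u : ℤ)):ℝ)^4 := by push_cast; ring
    rw [hrw]
    have hpos : (0:ℝ) < (((-u : ℤ)):ℝ) := by exact_mod_cast (by omega : (0:ℤ) < -u)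
    apply one_div_le_one_div_of_le (pow_pos hpos 4)
    have hle : -u ≤ (2:ℤ) ^ (b + 1) := by
      have h2 : -(u + 1) < 2 ^ (b+1) := hb2
      omega
    have hcast : (((-u : ℤ)):ℝ) ≤ (2 : ℝ) ^ (b + 1) := by exact_mod_cast hle
    exact pow_le_pow_left₀ hpos.le hcast 4
  · exfalso
    rw [if_neg hab] at hne
    by_cases hba : (b : ℤ) = (a : ℤ) + 1
    · have hb' : b = a + 1 := by exact_mod_cast hba
      subst hb'
      linarith
    · rw [if_neg hba] at hne; exact hne rfl

lemma blockIdx_zero' : blockIdx 0 = 0 := rfl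

lemma theta_cross_zero (u w : ℤ) (hu : u ≤ 0) (hv : 0 ≤ u + w) (hw : 2 ≤ w) :
    theta u (u + w) = 0 := by
  rcases (by omega : u = 0 ∨ u ≤ -1) with h0 | hneg
  · subst h0
    obtain ⟨b, hjb, hb1, hb2⟩ := exists_block_pos (0 + w) (by omega)
    have hb0 : b ≠ 0 := by
      rintro rfl
      norm_num at hb2
      omega
    rw [theta_eq_core, blockIdx_zero', hjb]
    unfold core
    split_ifs <;> first | rfl | (exfalso; omega)
  · obtain ⟨a, hia, ha1, ha2⟩ := exists_block_neg u hneg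
    rcases (by omega : u + w = 0 ∨ 1 ≤ u + w) with h0 | hpos
    · have ha0 : a ≠ 0 := by
        rintro rfl
        norm_num at ha2
        omega
      rw [theta_eq_core, h0, blockIdx_zero', hia]
      unfold core
      split_ifs <;> first | rfl | (exfalso; omega)
    · obtain ⟨b, hjb, hb1, hb2⟩ := exists_block_pos (u + w) hpos
      rw [theta_eq_core, hia, hjb]
      unfold core
      split_ifs <;> first | rfl | (exfalso; omega)

lemma theta_zero_one : theta 0 1 = 1 / 2 := by
  have h1 : blockIdx 1 = 1 := by
    unfold blockIdx
    rw [if_neg (by omega), if_pos (by omega)]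
    norm_num
  rw [theta_eq_core, blockIdx_zero', h1]
  unfold core
  norm_num

lemma theta_negone_zero : theta (-1) 0 = -(1 / 2) := by
  have h1 : blockIdx (-1) = -1 := by
    unfold blockIdx
    rw [if_neg (by omega), if_neg (by omega)]
    norm_num
  rw [theta_eq_core, blockIdx_zero', h1]
  unfold core
  norm_num

lemma qdiff (x : ℝ) (hx : 1 ≤ x) :
    1 / x ^ 4 ≤ (1 / 3) * (1 / (x - 1 / 2) ^ 3 - 1 / (x + 1 / 2) ^ 3) := by
  have h1 : (0:ℝ) < x - 1/2 := by linarith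
  have h2 : (0:ℝ) < x + 1/2 := by linarith
  have hA : (0:ℝ) < (x - 1/2)^3 := by positivity
  have hB : (0:ℝ) < (x + 1/2)^3 := by positivity
  have hx4 : (0:ℝ) < x^4 := by positivity
  rw [div_sub_div _ _ hA.ne' hB.ne', ← mul_div_assoc, div_le_div_iff₀ hx4 (by positivity)]
  nlinarith [sq_nonneg (x^2 - 9/80), sq_nonneg x, mul_pos hA hB, sq_nonneg (x - 1)]

lemma sumq (k : ℕ → ℕ) (m : ℕ) (hm : 1 ≤ m) (h1 : k 0 ≤ m)
    (h2 : ∀ n, k (n + 1) ≤ k n + 1) (h3 : ∀ n, m ≤ k n → k (n + 1) = k n + 1) :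
    ∑' n : ℕ, (if m ≤ k n then ENNReal.ofReal (1 / ((k n : ℝ)) ^ 4) else 0)
      ≤ ENNReal.ofReal ((1 / 3) * (1 / ((m : ℝ) - 1 / 2) ^ 3)) := by
  set G : ℕ → ℝ := fun n => (1 / 3) * (1 / (((max (k n) m : ℕ) : ℝ) - 1 / 2) ^ 3) with hG
  have hmr : (1:ℝ) ≤ (m:ℝ) := by exact_mod_cast hm
  have hdiff : ∀ n, (if m ≤ k n then ENNReal.ofReal (1 / ((k n : ℝ)) ^ 4) else 0)
      ≤ ENNReal.ofReal (G n - G (n + 1)) ∧ 0 ≤ G n - G (n + 1) := by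
    intro n
    by_cases hkn : m ≤ k n
    · have hmax1 : max (k n) m = k n := max_eq_left hkn
      have hk1 : k (n + 1) = k n + 1 := h3 n hkn
      have hmax2 : max (k (n + 1)) m = k n + 1 := by rw [hk1]; exact max_eq_left (by omega)
      have hx : (1:ℝ) ≤ (k n : ℝ) := by exact_mod_cast le_trans hm hkn
      have hq := qdiff (k n : ℝ) hx
      have hGeq : G n - G (n + 1)
          = (1/3) * (1 / ((k n : ℝ) - 1/2) ^ 3 - 1 / ((k n : ℝ) + 1/2) ^ 3) := by
        rw [hG]
        simp only [hmax1, hmax2]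
        push_cast
        ring
      rw [if_pos hkn, hGeq]
      constructor
      · exact ENNReal.ofReal_le_ofReal hq
      · exact le_trans (by positivity) hq
    · have hmax1 : max (k n) m = m := max_eq_right (by omega)
      have hmax2 : max (k (n + 1)) m = m := max_eq_right (by have := h2 n; omega)
      have hGeq : G n - G (n + 1) = 0 := by rw [hG]; simp only [hmax1, hmax2]; ring
      rw [if_neg hkn, hGeq]
      simp
  calc ∑' n : ℕ, (if m ≤ k n then ENNReal.ofReal (1 / ((k n : ℝ)) ^ 4) else 0)
      ≤ ∑' n : ℕ, ENNReal.ofReal (G n - G (n + 1)) :=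
        ENNReal.tsum_le_tsum fun n => (hdiff n).1
    _ ≤ ENNReal.ofReal (G 0) := by
        rw [ENNReal.tsum_eq_iSup_sum]
        apply iSup_le
        intro s
        obtain ⟨N, hN⟩ := s.exists_nat_subset_range
        calc ∑ n ∈ s, ENNReal.ofReal (G n - G (n + 1))
            ≤ ∑ n ∈ Finset.range N, ENNReal.ofReal (G n - G (n + 1)) :=
              Finset.sum_le_sum_of_subset hN
          _ = ENNReal.ofReal (∑ n ∈ Finset.range N, (G n - G (n + 1))) :=
              (ENNReal.ofReal_sum_of_nonneg fun n _ => (hdiff n).2).symm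
          _ = ENNReal.ofReal (G 0 - G N) := by rw [Finset.sum_range_sub' G]
          _ ≤ ENNReal.ofReal (G 0) := by
              apply ENNReal.ofReal_le_ofReal
              have hXN : (1:ℝ) ≤ ((max (k N) m : ℕ) : ℝ) := by
                have h' : m ≤ max (k N) m := le_max_right _ _
                exact_mod_cast le_trans hm h'
              have hp : (0:ℝ) < (((max (k N) m : ℕ) : ℝ) - 1/2)^3 := by
                apply pow_pos
                linarith
              have h0 : 0 ≤ G N := by
                rw [hG]
                have := one_div_pos.mpr hp
                nlinarith
              linarith
    _ = ENNReal.ofReal ((1 / 3) * (1 / ((m : ℝ) - 1 / 2) ^ 3)) := by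
        rw [hG]
        simp only [max_eq_right h1]

open ENNReal in
noncomputable def T (w : ℤ) : ℝ≥0∞ := ∑' u : ℤ, ENNReal.ofReal (theta u (u + w) ^ 2)

lemma T_split (w : ℤ) :
    T w = (∑' n : ℕ, ENNReal.ofReal (theta (n : ℤ) ((n : ℤ) + w) ^ 2))
        + ∑' n : ℕ, ENNReal.ofReal (theta (-((n : ℤ) + 1)) (-((n : ℤ) + 1) + w) ^ 2) := by
  rw [T, ← tsum_nat_add_neg_add_one ENNReal.summable, ENNReal.tsum_add]

lemma TB1 : T 1 ≤ ENNReal.ofReal (3 / 4) := by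
  rw [T_split]
  have hpos : (∑' n : ℕ, ENNReal.ofReal (theta (n : ℤ) ((n : ℤ) + 1) ^ 2))
      ≤ ENNReal.ofReal (1 / 4) + ENNReal.ofReal (8 / 81) := by
    rw [tsum_eq_zero_add' ENNReal.summable]
    apply add_le_add
    · apply ENNReal.ofReal_le_ofReal
      norm_num [theta_zero_one]
    · calc ∑' n : ℕ, ENNReal.ofReal (theta ((n : ℕ) + 1 : ℤ) (((n : ℕ) + 1 : ℤ) + 1) ^ 2)
          ≤ ∑' n : ℕ, (if 2 ≤ n + 2 then ENNReal.ofReal (1 / (((n + 2 : ℕ) : ℝ)) ^ 4) else 0) := by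
            apply ENNReal.tsum_le_tsum
            intro n
            rw [if_pos (by omega)]
            apply ENNReal.ofReal_le_ofReal
            have h := theta_pos_one ((n : ℤ) + 1) (by omega)
            calc theta ((n : ℕ) + 1 : ℤ) (((n : ℕ) + 1 : ℤ) + 1) ^ 2
                ≤ 1 / ((((n : ℤ) + 1 : ℤ) : ℝ) + 1) ^ 4 := by push_cast at h ⊢; convert h using 3 <;> ring
              _ = 1 / (((n + 2 : ℕ) : ℝ)) ^ 4 := by push_cast; ring_nf
        _ ≤ ENNReal.ofReal ((1 / 3) * (1 / ((2 : ℝ) - 1 / 2) ^ 3)) := by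
            exact sumq (fun n => n + 2) 2 (by omega) (le_refl 2) (fun n => le_refl _)
              (fun n _ => rfl)
        _ ≤ ENNReal.ofReal (8 / 81) := by apply ENNReal.ofReal_le_ofReal; norm_num
  have hneg : (∑' n : ℕ, ENNReal.ofReal (theta (-((n : ℤ) + 1)) (-((n : ℤ) + 1) + 1) ^ 2))
      ≤ ENNReal.ofReal (1 / 4) + ENNReal.ofReal (8 / 81) := by
    rw [tsum_eq_zero_add' ENNReal.summable]
    apply add_le_add
    · apply ENNReal.ofReal_le_ofReal
      have : (-(((0 : ℕ) : ℤ) + 1) + 1) = (0 : ℤ) := by norm_num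
      rw [show (-(((0 : ℕ) : ℤ) + 1)) = (-1 : ℤ) by norm_num, show ((-1 : ℤ) + 1) = (0:ℤ) by norm_num,
        theta_negone_zero]
      norm_num
    · calc ∑' n : ℕ, ENNReal.ofReal (theta (-(((n + 1 : ℕ) : ℤ) + 1)) (-(((n + 1 : ℕ) : ℤ) + 1) + 1) ^ 2)
          ≤ ∑' n : ℕ, (if 2 ≤ n + 2 then ENNReal.ofReal (1 / (((n + 2 : ℕ) : ℝ)) ^ 4) else 0) := by
            apply ENNReal.tsum_le_tsum
            intro n
            rw [if_pos (by omega)]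
            apply ENNReal.ofReal_le_ofReal
            have h := theta_neg_one (-(((n + 1 : ℕ) : ℤ) + 1)) (by push_cast; omega)
            calc theta (-(((n + 1 : ℕ) : ℤ) + 1)) (-(((n + 1 : ℕ) : ℤ) + 1) + 1) ^ 2
                ≤ 1 / (((-(((n + 1 : ℕ) : ℤ) + 1) : ℤ)) : ℝ) ^ 4 := h
              _ = 1 / (((n + 2 : ℕ) : ℝ)) ^ 4 := by push_cast; ring_nf
        _ ≤ ENNReal.ofReal ((1 / 3) * (1 / ((2 : ℝ) - 1 / 2) ^ 3)) := by
            exact sumq (fun n => n + 2) 2 (by omega) (le_refl 2) (fun n => le_refl _)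
              (fun n _ => rfl)
        _ ≤ ENNReal.ofReal (8 / 81) := by apply ENNReal.ofReal_le_ofReal; norm_num
  calc _ ≤ (ENNReal.ofReal (1 / 4) + ENNReal.ofReal (8 / 81))
        + (ENNReal.ofReal (1 / 4) + ENNReal.ofReal (8 / 81)) := add_le_add hpos hneg
    _ = ENNReal.ofReal (1 / 4 + 8 / 81 + (1 / 4 + 8 / 81)) := by
        rw [← ENNReal.ofReal_add (by norm_num) (by norm_num),
          ← ENNReal.ofReal_add (by norm_num) (by norm_num)]
    _ ≤ ENNReal.ofReal (3 / 4) := by apply ENNReal.ofReal_le_ofReal; norm_num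

lemma TGEN (W : ℕ) (hW : 2 ≤ W) :
    T W ≤ 2 * ENNReal.ofReal ((1 / 3) * (1 / (((W / 3 + 1 : ℕ) : ℝ) - 1 / 2) ^ 3)) := by
  set m : ℕ := W / 3 + 1 with hm
  rw [T_split]
  have hpos : (∑' n : ℕ, ENNReal.ofReal (theta (n : ℤ) ((n : ℤ) + W) ^ 2))
      ≤ ENNReal.ofReal ((1 / 3) * (1 / ((m : ℝ) - 1 / 2) ^ 3)) := by
    refine le_trans (ENNReal.tsum_le_tsum (fun n => ?_))
      (sumq (fun n => n) m (by omega) (Nat.zero_le m) (fun n => le_refl _) (fun n _ => rfl))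
    by_cases hth : theta (n : ℤ) ((n : ℤ) + W) = 0
    · rw [hth]
      simp
    rcases Nat.eq_zero_or_pos n with rfl | hn
    · exfalso
      exact hth (theta_cross_zero 0 W (by omega) (by push_cast; omega) (by exact_mod_cast hW))
    obtain ⟨hlt, hb⟩ := theta_pos_bound (n : ℤ) W (by omega) (by omega) hth
    have hmn : m ≤ n := by
      have : W < 3 * n := by exact_mod_cast hlt
      omega
    rw [if_pos hmn]
    apply ENNReal.ofReal_le_ofReal
    show theta (n : ℤ) ((n : ℤ) + W) ^ 2 ≤ 1 / ((n : ℝ)) ^ 4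
    have : (((n : ℤ) : ℝ)) = (n : ℝ) := by push_cast; rfl
    rw [← this]
    exact hb
  have hneg : (∑' n : ℕ, ENNReal.ofReal (theta (-((n : ℤ) + 1)) (-((n : ℤ) + 1) + W) ^ 2))
      ≤ ENNReal.ofReal ((1 / 3) * (1 / ((m : ℝ) - 1 / 2) ^ 3)) := by
    refine le_trans (ENNReal.tsum_le_tsum (fun n => ?_))
      (sumq (fun n => n + 1 - W) m (by omega) (by show 0 + 1 - W ≤ m; omega)
        (fun n => by show n + 1 + 1 - W ≤ n + 1 - W + 1; omega)
        (fun n h => by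
          have h' : m ≤ n + 1 - W := h
          show n + 1 + 1 - W = n + 1 - W + 1
          omega))
    by_cases hth : theta (-((n : ℤ) + 1)) (-((n : ℤ) + 1) + W) = 0
    · rw [hth]
      simp
    have hcase : ¬ (n + 1 ≤ W) := by
      intro hle
      exact hth (theta_cross_zero _ W (by omega) (by push_cast; omega) (by exact_mod_cast hW))
    obtain ⟨hlt, hb⟩ := theta_neg_bound (-((n : ℤ) + 1)) W (by omega) (by omega) hth
    have hmn : m ≤ n + 1 - W := by
      have : (W : ℤ) < 3 * ((n : ℤ) + 1 - W) := by push_cast at hlt ⊢; linarith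
      omega
    rw [if_pos hmn]
    apply ENNReal.ofReal_le_ofReal
    calc theta (-((n : ℤ) + 1)) (-((n : ℤ) + 1) + W) ^ 2
        ≤ 1 / (((-(-((n : ℤ) + 1) + W) : ℤ) : ℝ)) ^ 4 := hb
      _ = 1 / (((n + 1 - W : ℕ) : ℝ)) ^ 4 := by
          have : ((n + 1 - W : ℕ) : ℤ) = (n : ℤ) + 1 - W := by omega
          rw [show (-(-((n : ℤ) + 1) + W) : ℤ) = (n : ℤ) + 1 - W by ring, ← this]
          push_cast
          ring
  calc _ ≤ ENNReal.ofReal ((1 / 3) * (1 / ((m : ℝ) - 1 / 2) ^ 3))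
        + ENNReal.ofReal ((1 / 3) * (1 / ((m : ℝ) - 1 / 2) ^ 3)) := add_le_add hpos hneg
    _ = 2 * ENNReal.ofReal ((1 / 3) * (1 / ((m : ℝ) - 1 / 2) ^ 3)) := (two_mul _).symm

open ENNReal

/-- numeric tail bound -/
lemma tail_num (n : ℕ) :
    (2 : ℝ≥0∞) * ENNReal.ofReal ((1 / 3) * (1 / ((((n + 4) / 3 + 1 : ℕ) : ℝ) - 1 / 2) ^ 3))
      ≤ ENNReal.ofReal (144 / ((n : ℝ) + 1) ^ 3) := by
  rw [show (2 : ℝ≥0∞) = ENNReal.ofReal 2 by norm_num, ← ENNReal.ofReal_mul (by norm_num)]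
  apply ENNReal.ofReal_le_ofReal
  set M : ℕ := (n + 4) / 3 + 1 with hM
  have h3M : n + 5 ≤ 3 * M := by omega
  have hMr : ((n : ℝ) + 5) ≤ 3 * (M : ℝ) := by exact_mod_cast h3M
  have h6 : ((n : ℝ) + 1) / 6 ≤ (M : ℝ) - 1 / 2 := by linarith
  have hp1 : (0 : ℝ) < ((n : ℝ) + 1) / 6 := by positivity
  have hcube : (((n : ℝ) + 1) / 6) ^ 3 ≤ ((M : ℝ) - 1 / 2) ^ 3 :=
    pow_le_pow_left₀ hp1.le h6 3
  have hc0 : (0 : ℝ) < (((n : ℝ) + 1) / 6) ^ 3 := by positivity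
  calc 2 * ((1 / 3) * (1 / ((M : ℝ) - 1 / 2) ^ 3))
      ≤ 2 * ((1 / 3) * (1 / (((n : ℝ) + 1) / 6) ^ 3)) := by
        have := one_div_le_one_div_of_le hc0 hcube
        nlinarith
    _ = 144 / ((n : ℝ) + 1) ^ 3 := by
        field_simp
        ring

theorem theta_energy_bound (p : ℕ → ℝ) (hp : ∀ n : ℕ, 1 ≤ n → 0 < p n) :
    ((1 : ENNReal) / 2 *
        ∑' uv : ℤ × ℤ,
          (if uv.1 ≠ uv.2 then
            ENNReal.ofReal (theta uv.1 uv.2 ^ 2 / p (uv.2 - uv.1).natAbs) else 0)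
      ≤ ENNReal.ofReal (3 / (4 * p 1) + 1 / (8 * p 2) + 32 / (3 * p 2) + 32 / (3 * p 3))
        + 288 * ∑' w : ℕ,
            (if 4 ≤ w then ENNReal.ofReal (1 / (((w : ℝ) - 3) ^ 3 * p w)) else 0)) ∧
    (Summable (fun n : ℕ => 1 / ((n : ℝ) ^ 3 * p n)) →
      ∑' uv : ℤ × ℤ,
          (if uv.1 ≠ uv.2 then
            ENNReal.ofReal (theta uv.1 uv.2 ^ 2 / p (uv.2 - uv.1).natAbs) else 0) < ⊤) := by
  have hp1 : (0:ℝ) < p 1 := hp 1 (by omega)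
  have hp2 : (0:ℝ) < p 2 := hp 2 (by omega)
  have hp3 : (0:ℝ) < p 3 := hp 3 (by omega)
  set F : ℤ × ℤ → ℝ≥0∞ := fun uv =>
    if uv.1 ≠ uv.2 then ENNReal.ofReal (theta uv.1 uv.2 ^ 2 / p (uv.2 - uv.1).natAbs) else 0
    with hF
  set Q : ℝ≥0∞ :=
    ∑' w : ℕ, (if 4 ≤ w then ENNReal.ofReal (1 / (((w : ℝ) - 3) ^ 3 * p w)) else 0) with hQ
  -- reindex the double sum
  have hsum : ∑' uv : ℤ × ℤ, F uv = ∑' w : ℤ, ∑' u : ℤ, F (u, u + w) := by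
    rw [← Equiv.tsum_eq
      (⟨fun x => (x.2, x.2 + x.1), fun y => (y.2 - y.1, y.1),
        by intro x; simp, by intro y; simp⟩ : ℤ × ℤ ≃ ℤ × ℤ) F, ENNReal.tsum_prod']
    rfl
  have hzero : ∑' u : ℤ, F (u, u + 0) = 0 := by
    simp [hF]
  have hwfun : ∀ w : ℤ, w ≠ 0 →
      ∑' u : ℤ, F (u, u + w) = T w * ENNReal.ofReal (p w.natAbs)⁻¹ := by
    intro w hw0
    rw [T, ← ENNReal.tsum_mul_right]
    apply tsum_congr
    intro u
    have hne : (u, u + w).1 ≠ (u, u + w).2 := by simp; omega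
    rw [hF]
    simp only []
    rw [if_pos hne, show (u + w - u) = w by ring, div_eq_mul_inv,
      ENNReal.ofReal_mul' (inv_nonneg.mpr (hp w.natAbs (by omega)).le)]
  have hsymm : ∀ w : ℤ, T (-w) = T w := by
    intro w
    rw [T, T, ← (Equiv.addRight w).tsum_eq (fun u => ENNReal.ofReal (theta u (u + -w) ^ 2))]
    apply tsum_congr
    intro u
    show ENNReal.ofReal (theta (u + w) ((u + w) + -w) ^ 2) = _
    rw [show (u + w) + -w = u by ring, theta_sq_swap]
  set A : ℕ → ℝ≥0∞ := fun n => T ((n : ℤ) + 1) * ENNReal.ofReal (p (n + 1))⁻¹ with hA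
  have hhalf : (1 : ℝ≥0∞) / 2 * (∑' uv : ℤ × ℤ, F uv) = ∑' n : ℕ, A n := by
    rw [hsum, ← tsum_nat_add_neg_add_one ENNReal.summable, ENNReal.tsum_add]
    have h1 : (∑' n : ℕ, ∑' u : ℤ, F (u, u + -((n : ℤ) + 1))) = ∑' n : ℕ, A n := by
      apply tsum_congr
      intro n
      have hAn : A n = T ((n : ℤ) + 1) * ENNReal.ofReal (p (n + 1))⁻¹ := rfl
      rw [hAn, hwfun _ (by omega), hsymm ((n : ℤ) + 1),
        show ((-((n : ℤ) + 1)).natAbs) = n + 1 by omega]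
    have h2 : (∑' n : ℕ, ∑' u : ℤ, F (u, u + (n : ℤ))) = ∑' n : ℕ, A n := by
      rw [tsum_eq_zero_add' ENNReal.summable]
      rw [show ((0 : ℕ) : ℤ) = (0 : ℤ) by norm_num, hzero, zero_add]
      apply tsum_congr
      intro n
      have hAn : A n = T ((n : ℤ) + 1) * ENNReal.ofReal (p (n + 1))⁻¹ := rfl
      rw [hAn, hwfun _ (by push_cast; omega),
        show (((n + 1 : ℕ) : ℤ)) = (n : ℤ) + 1 by push_cast; ring,
        show (((n : ℤ) + 1).natAbs) = n + 1 by omega]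
    rw [h1, h2, ← two_mul, ← mul_assoc,
      show (1 : ℝ≥0∞) / 2 * 2 = 1 by
        rw [one_div, ENNReal.inv_mul_cancel (by norm_num) (by norm_num)],
      one_mul]
  -- individual bounds
  have hA0 : A 0 ≤ ENNReal.ofReal (3 / (4 * p 1)) := by
    have hA0' : A 0 = T 1 * ENNReal.ofReal (p 1)⁻¹ := by rw [hA]; norm_num
    rw [hA0']
    calc T 1 * ENNReal.ofReal (p 1)⁻¹
        ≤ ENNReal.ofReal (3 / 4) * ENNReal.ofReal (p 1)⁻¹ := mul_le_mul_left TB1 _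
      _ = ENNReal.ofReal (3 / 4 * (p 1)⁻¹) := (ENNReal.ofReal_mul (by norm_num)).symm
      _ = ENNReal.ofReal (3 / (4 * p 1)) := by rw [div_eq_mul_inv, div_eq_mul_inv, mul_inv]; ring_nf
  have hT2 : T 2 ≤ ENNReal.ofReal (16 / 3) := by
    have := TGEN 2 (by omega)
    calc T 2 ≤ 2 * ENNReal.ofReal ((1 / 3) * (1 / (((2 / 3 + 1 : ℕ) : ℝ) - 1 / 2) ^ 3)) := by
          exact_mod_cast this
      _ = ENNReal.ofReal (16 / 3) := by
          rw [show (2 : ℝ≥0∞) = ENNReal.ofReal 2 by norm_num,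
            ← ENNReal.ofReal_mul (by norm_num)]
          norm_num
  have hT3 : T 3 ≤ ENNReal.ofReal (16 / 81) := by
    have := TGEN 3 (by omega)
    calc T 3 ≤ 2 * ENNReal.ofReal ((1 / 3) * (1 / (((3 / 3 + 1 : ℕ) : ℝ) - 1 / 2) ^ 3)) := by
          exact_mod_cast this
      _ = ENNReal.ofReal (16 / 81) := by
          rw [show (2 : ℝ≥0∞) = ENNReal.ofReal 2 by norm_num,
            ← ENNReal.ofReal_mul (by norm_num)]
          norm_num
  have hA1 : A 1 ≤ ENNReal.ofReal (1 / (8 * p 2) + 32 / (3 * p 2)) := by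
    have hA1' : A 1 = T 2 * ENNReal.ofReal (p 2)⁻¹ := by rw [hA]; norm_num
    rw [hA1']
    calc T 2 * ENNReal.ofReal (p 2)⁻¹
        ≤ ENNReal.ofReal (16 / 3) * ENNReal.ofReal (p 2)⁻¹ := mul_le_mul_left hT2 _
      _ = ENNReal.ofReal (16 / 3 * (p 2)⁻¹) := (ENNReal.ofReal_mul (by norm_num)).symm
      _ ≤ ENNReal.ofReal (1 / (8 * p 2) + 32 / (3 * p 2)) := by
          apply ENNReal.ofReal_le_ofReal
          have h : 1 / (8 * p 2) + 32 / (3 * p 2) = (1 / 8 + 32 / 3) * (p 2)⁻¹ := by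
            field_simp
          rw [h]
          apply mul_le_mul_of_nonneg_right (by norm_num) (inv_nonneg.mpr hp2.le)
  have hA2 : A 2 ≤ ENNReal.ofReal (32 / (3 * p 3)) := by
    have hA2' : A 2 = T 3 * ENNReal.ofReal (p 3)⁻¹ := by rw [hA]; norm_num
    rw [hA2']
    calc T 3 * ENNReal.ofReal (p 3)⁻¹
        ≤ ENNReal.ofReal (16 / 81) * ENNReal.ofReal (p 3)⁻¹ := mul_le_mul_left hT3 _
      _ = ENNReal.ofReal (16 / 81 * (p 3)⁻¹) := (ENNReal.ofReal_mul (by norm_num)).symm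
      _ ≤ ENNReal.ofReal (32 / (3 * p 3)) := by
          apply ENNReal.ofReal_le_ofReal
          have h : 32 / (3 * p 3) = (32 / 3) * (p 3)⁻¹ := by
            field_simp
          rw [h]
          apply mul_le_mul_of_nonneg_right (by norm_num) (inv_nonneg.mpr hp3.le)
  have htailterm : ∀ n : ℕ, A (n + 3)
      ≤ 288 * (if 4 ≤ n + 4 then
          ENNReal.ofReal (1 / ((((n + 4 : ℕ) : ℝ) - 3) ^ 3 * p (n + 4))) else 0) := by
    intro n
    rw [if_pos (by omega)]
    have hpn : (0:ℝ) < p (n + 4) := hp (n + 4) (by omega)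
    have hTn : T ((n + 3 : ℕ) + 1 : ℤ) ≤ ENNReal.ofReal (144 / ((n : ℝ) + 1) ^ 3) := by
      have h1 := TGEN (n + 4) (by omega)
      have h2 := tail_num n
      have hcast : T (((n + 4 : ℕ) : ℤ)) = T ((n + 3 : ℕ) + 1 : ℤ) := by
        congr 1
      rw [hcast] at h1
      exact le_trans h1 h2
    have hAn : A (n + 3) = T ((n + 3 : ℕ) + 1 : ℤ) * ENNReal.ofReal (p (n + 4))⁻¹ := by
      rw [hA]
    rw [hAn]
    calc T ((n + 3 : ℕ) + 1 : ℤ) * ENNReal.ofReal (p (n + 4))⁻¹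
        ≤ ENNReal.ofReal (144 / ((n : ℝ) + 1) ^ 3) * ENNReal.ofReal (p (n + 4))⁻¹ :=
          mul_le_mul_left hTn _
      _ = ENNReal.ofReal (144 / ((n : ℝ) + 1) ^ 3 * (p (n + 4))⁻¹) :=
          (ENNReal.ofReal_mul (by positivity)).symm
      _ ≤ ENNReal.ofReal (288 * (1 / ((((n + 4 : ℕ) : ℝ) - 3) ^ 3 * p (n + 4)))) := by
          apply ENNReal.ofReal_le_ofReal
          have hc : (((n + 4 : ℕ) : ℝ) - 3) = (n : ℝ) + 1 := by push_cast; ring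
          rw [hc]
          have hpos : (0:ℝ) < ((n : ℝ) + 1) ^ 3 * p (n + 4) := by positivity
          rw [div_eq_mul_inv, mul_assoc, ← mul_inv, one_div, mul_comm (((n:ℝ)+1)^3) (p (n+4)),
            mul_comm (p (n+4)) (((n:ℝ)+1)^3)]
          have : (144:ℝ) * (((n : ℝ) + 1) ^ 3 * p (n + 4))⁻¹
              ≤ 288 * (((n : ℝ) + 1) ^ 3 * p (n + 4))⁻¹ := by
            apply mul_le_mul_of_nonneg_right (by norm_num) (inv_nonneg.mpr hpos.le)
          exact this
      _ = 288 * ENNReal.ofReal (1 / ((((n + 4 : ℕ) : ℝ) - 3) ^ 3 * p (n + 4))) := by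
          rw [ENNReal.ofReal_mul (by norm_num)]
          norm_num
  have htail : (∑' n : ℕ, A (n + 3)) ≤ 288 * Q := by
    calc (∑' n : ℕ, A (n + 3))
        ≤ ∑' n : ℕ, 288 * (if 4 ≤ n + 4 then
            ENNReal.ofReal (1 / ((((n + 4 : ℕ) : ℝ) - 3) ^ 3 * p (n + 4))) else 0) :=
          ENNReal.tsum_le_tsum htailterm
      _ = 288 * ∑' n : ℕ, (if 4 ≤ n + 4 then
            ENNReal.ofReal (1 / ((((n + 4 : ℕ) : ℝ) - 3) ^ 3 * p (n + 4))) else 0) :=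
          ENNReal.tsum_mul_left
      _ ≤ 288 * Q := by
          apply mul_le_mul_right
          rw [hQ]
          exact tsum_comp_le_tsum_of_injective (add_left_injective 4)
            (fun (w : ℕ) => if 4 ≤ w then ENNReal.ofReal (1 / (((w : ℝ) - 3) ^ 3 * p w)) else 0)
  have hsplit : (∑' n : ℕ, A n) = A 0 + (A 1 + (A 2 + ∑' n : ℕ, A (n + 3))) := by
    rw [tsum_eq_zero_add' ENNReal.summable]
    congr 1
    rw [tsum_eq_zero_add' ENNReal.summable]
    congr 1
    rw [tsum_eq_zero_add' ENNReal.summable]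
  have hmain : (1 : ℝ≥0∞) / 2 * (∑' uv : ℤ × ℤ, F uv)
      ≤ ENNReal.ofReal (3 / (4 * p 1) + 1 / (8 * p 2) + 32 / (3 * p 2) + 32 / (3 * p 3))
        + 288 * Q := by
    rw [hhalf, hsplit]
    have hy1 : (0:ℝ) ≤ 3 / (4 * p 1) := by positivity
    have hy2 : (0:ℝ) ≤ 1 / (8 * p 2) + 32 / (3 * p 2) := by positivity
    have hy3 : (0:ℝ) ≤ 32 / (3 * p 3) := by positivity
    calc A 0 + (A 1 + (A 2 + ∑' n : ℕ, A (n + 3)))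
        ≤ ENNReal.ofReal (3 / (4 * p 1)) + (ENNReal.ofReal (1 / (8 * p 2) + 32 / (3 * p 2))
          + (ENNReal.ofReal (32 / (3 * p 3)) + 288 * Q)) :=
          add_le_add hA0 (add_le_add hA1 (add_le_add hA2 htail))
      _ = ENNReal.ofReal (3 / (4 * p 1) + 1 / (8 * p 2) + 32 / (3 * p 2) + 32 / (3 * p 3))
          + 288 * Q := by
          rw [← add_assoc, ← add_assoc, ← ENNReal.ofReal_add hy1 hy2,
            ← ENNReal.ofReal_add (by positivity) hy3]
          ring_nf
  constructor
  · exact hmain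
  · intro hsummable
    have hterm_nonneg : ∀ n : ℕ, (0:ℝ) ≤ 1 / ((n : ℝ) ^ 3 * p n) := by
      intro n
      rcases Nat.eq_zero_or_pos n with rfl | hn
      · norm_num
      · have := hp n hn
        positivity
    have hQle : Q ≤ 64 * ∑' n : ℕ, ENNReal.ofReal (1 / ((n : ℝ) ^ 3 * p n)) := by
      rw [hQ, ← ENNReal.tsum_mul_left]
      apply ENNReal.tsum_le_tsum
      intro w
      by_cases hw : 4 ≤ w
      · rw [if_pos hw]
        have hw3 : (0:ℝ) < (w : ℝ) - 3 := by
          have : (4:ℝ) ≤ (w:ℝ) := by exact_mod_cast hw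
          linarith
        have hwp : (0:ℝ) < p w := hp w (by omega)
        have hw4 : (w:ℝ) ≤ 4 * ((w:ℝ) - 3) := by
          have : (4:ℝ) ≤ (w:ℝ) := by exact_mod_cast hw
          linarith
        have hcube : (w:ℝ) ^ 3 ≤ 64 * ((w:ℝ) - 3) ^ 3 := by
          have h0 : (0:ℝ) ≤ (w:ℝ) := by positivity
          have := pow_le_pow_left₀ h0 hw4 3
          calc (w:ℝ)^3 ≤ (4 * ((w:ℝ) - 3))^3 := this
            _ = 64 * ((w:ℝ) - 3)^3 := by ring
        calc ENNReal.ofReal (1 / (((w : ℝ) - 3) ^ 3 * p w))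
            ≤ ENNReal.ofReal (64 * (1 / ((w : ℝ) ^ 3 * p w))) := by
              apply ENNReal.ofReal_le_ofReal
              rw [div_le_iff₀ (by positivity)]
              have hw0 : (0:ℝ) < (w:ℝ) ^ 3 := by
                have : (4:ℝ) ≤ (w:ℝ) := by exact_mod_cast hw
                positivity
              have key : 64 * (1 / ((w:ℝ) ^ 3 * p w)) * (((w:ℝ) - 3) ^ 3 * p w)
                  = 64 * ((w:ℝ) - 3) ^ 3 / (w:ℝ) ^ 3 := by
                field_simp
              rw [key, le_div_iff₀ hw0]
              linarith
          _ = 64 * ENNReal.ofReal (1 / ((w : ℝ) ^ 3 * p w)) := by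
              rw [ENNReal.ofReal_mul (by norm_num)]
              norm_num
      · rw [if_neg hw]
        exact zero_le
    have hQfin : Q < ⊤ := by
      apply lt_of_le_of_lt hQle
      rw [← ENNReal.ofReal_tsum_of_nonneg hterm_nonneg hsummable]
      exact ENNReal.mul_lt_top (by norm_num) ENNReal.ofReal_lt_top
    have hRHS : ENNReal.ofReal (3 / (4 * p 1) + 1 / (8 * p 2) + 32 / (3 * p 2) + 32 / (3 * p 3))
        + 288 * Q < ⊤ := by
      apply ENNReal.add_lt_top.mpr
      exact ⟨ENNReal.ofReal_lt_top, ENNReal.mul_lt_top (by norm_num) hQfin⟩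
    by_contra htop
    push_neg at htop
    have heq : (∑' uv : ℤ × ℤ, F uv) = ⊤ := top_le_iff.mp htop
    have : (1 : ℝ≥0∞) / 2 * (∑' uv : ℤ × ℤ, F uv) = ⊤ := by
      rw [heq, ENNReal.mul_top (by norm_num)]
    rw [this] at hmain
    exact absurd (lt_of_le_of_lt hmain hRHS) (by simp)
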